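/- arXiv:1108.4306 — 3 statements merged into one kernel-verified Lean document; each statement's English description precedes it below -/
import Mathlib

section
/- Let K ≥ 2 and β : Fin K → ℂ with ∑ j, |β j|² = 1. If |∑ j, β j|² < 1/(12K), then there exist two distinct indices j₁ ≠ j₂ with |β j₁|² ≥ 1/K⁴ and |β j₂|² ≥ 1/K⁴. -/
theorem stmt_1 (K : ℕ) (hK : 2 ≤ K) (β : Fin K → ℂ)
    (hnorm : ∑ j, ‖β j‖ ^ 2 = 1)
    (hsmall : ‖∑ j, β j‖ ^ 2 < 1 / (12 * (K : ℝ))) :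
    ∃ j₁ j₂ : Fin K, j₁ ≠ j₂ ∧ ‖β j₁‖ ^ 2 ≥ 1 / (K : ℝ) ^ 4 ∧
      ‖β j₂‖ ^ 2 ≥ 1 / (K : ℝ) ^ 4 := by
  by_contra hcon
  push_neg at hcon
  have hKr : (2:ℝ) ≤ (K:ℝ) := by exact_mod_cast hK
  have hKpos : (0:ℝ) < (K:ℝ) := by linarith
  haveI : Nonempty (Fin K) := Fin.pos_iff_nonempty.mp (by omega)
  -- there is an index with large mass
  obtain ⟨j₀, hj₀⟩ : ∃ j₀ : Fin K, 1/(K:ℝ) ≤ ‖β j₀‖^2 := by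
    by_contra h
    push_neg at h
    have hlt : ∑ j, ‖β j‖^2 < ∑ _j : Fin K, 1/(K:ℝ) :=
      Finset.sum_lt_sum_of_nonempty Finset.univ_nonempty (fun i _ => h i)
    rw [hnorm, Finset.sum_const, Finset.card_univ, Fintype.card_fin, nsmul_eq_mul,
      mul_one_div, div_self (ne_of_gt hKpos)] at hlt
    exact lt_irrefl _ hlt
  have hK4 : 1/(K:ℝ)^4 ≤ 1/(K:ℝ) := by
    apply one_div_le_one_div_of_le hKpos
    nlinarith [sq_nonneg ((K:ℝ)^2 - (K:ℝ)), sq_nonneg ((K:ℝ) - 1), hKr, hKpos]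
  have hP0 : 1/(K:ℝ)^4 ≤ ‖β j₀‖^2 := le_trans hK4 hj₀
  -- all other indices are small
  have hsmall_others : ∀ j : Fin K, j ≠ j₀ → ‖β j‖ < 1/(K:ℝ)^2 := by
    intro j hj
    have h2 : ‖β j‖^2 < 1/(K:ℝ)^4 := hcon j₀ j (Ne.symm hj) hP0
    have : ‖β j‖^2 < (1/(K:ℝ)^2)^2 := by
      rw [div_pow, one_pow]; rw [show ((K:ℝ)^2)^2 = (K:ℝ)^4 by ring]; exact h2
    exact lt_of_pow_lt_pow_left₀ 2 (by positivity) this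
  -- sum of the others
  set s : ℝ := ∑ j ∈ Finset.univ.erase j₀, ‖β j‖ with hs_def
  have hs_le : s ≤ (K:ℝ) * (1/(K:ℝ)^2) := by
    have h1 : s ≤ ∑ _j ∈ Finset.univ.erase j₀, (1/(K:ℝ)^2) :=
      Finset.sum_le_sum (fun i hi =>
        le_of_lt (hsmall_others i (Finset.ne_of_mem_erase hi)))
    rw [Finset.sum_const, nsmul_eq_mul] at h1
    refine h1.trans ?_
    apply mul_le_mul_of_nonneg_right _ (by positivity)
    have : (Finset.univ.erase j₀).card ≤ K := by
      calc (Finset.univ.erase j₀).card ≤ (Finset.univ : Finset (Fin K)).card :=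
            Finset.card_le_card (Finset.erase_subset _ _)
        _ = K := by simp
    exact_mod_cast this
  -- triangle inequality
  set x : ℝ := ‖∑ j, β j‖ with hx_def
  have htri : ‖β j₀‖ ≤ x + s := by
    have hsplit : β j₀ + ∑ j ∈ Finset.univ.erase j₀, β j = ∑ j, β j :=
      Finset.add_sum_erase _ _ (Finset.mem_univ j₀)
    have : ‖β j₀‖ = ‖(∑ j, β j) - ∑ j ∈ Finset.univ.erase j₀, β j‖ := by
      rw [← hsplit]; ring_nf
    rw [this]
    calc ‖(∑ j, β j) - ∑ j ∈ Finset.univ.erase j₀, β j‖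
        ≤ ‖∑ j, β j‖ + ‖∑ j ∈ Finset.univ.erase j₀, β j‖ := norm_sub_le _ _
      _ ≤ x + s := by
          gcongr
          exact norm_sum_le _ _
  -- sqrt argument
  set t : ℝ := Real.sqrt (1/(K:ℝ)) with ht_def
  have ht0 : 0 ≤ t := Real.sqrt_nonneg _
  have ht2 : t^2 = 1/(K:ℝ) := Real.sq_sqrt (by positivity)
  have hta : t ≤ ‖β j₀‖ := by
    have := Real.sqrt_le_sqrt hj₀
    rwa [Real.sqrt_sq (norm_nonneg _)] at this
  have hthalf : t^2 ≤ 1/2 := by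
    rw [ht2]
    rw [div_le_div_iff₀ hKpos (by norm_num)]
    linarith
  have hceq : (K:ℝ) * (1/(K:ℝ)^2) = t^2 := by
    rw [ht2]; field_simp
  have hx0 : 0 ≤ x := norm_nonneg _
  have hx1 : t - t^2 ≤ x := by
    have : t ≤ x + t^2 := by
      calc t ≤ ‖β j₀‖ := hta
        _ ≤ x + s := htri
        _ ≤ x + t^2 := by rw [← hceq]; linarith
    linarith
  have ht1 : t ≤ 1 := by nlinarith
  have hx2 : (t - t^2)^2 ≤ x^2 := by
    apply pow_le_pow_left₀ (by nlinarith) hx1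
  have hsmall' : x^2 < t^2/12 := by
    rw [ht2]
    calc x^2 < 1/(12*(K:ℝ)) := hsmall
      _ = (1/(K:ℝ))/12 := by ring
  -- final contradiction
  nlinarith [mul_nonneg (sq_nonneg t) (sq_nonneg (3*t - 2)),
    mul_nonneg (sq_nonneg t) (by linarith : (0:ℝ) ≤ 1/2 - t^2)]
end

section
/- Let K ≥ 2 and β : Fin K → ℂ with ∑ j, |β j|² = 1. If there is an index j₀ with |β j₀|² ≥ 1/K and |β j|² ≤ 1/K⁴ for all j ≠ j₀, then |∑ j, β j|² ≥ (1 - 1/√K)²/K. -/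
theorem stmt_2 (K : ℕ) (hK : 2 ≤ K) (β : Fin K → ℂ)
    (hnorm : ∑ j, ‖β j‖ ^ 2 = 1) (j₀ : Fin K)
    (hbig : ‖β j₀‖ ^ 2 ≥ 1 / (K : ℝ))
    (hsmall : ∀ j : Fin K, j ≠ j₀ → ‖β j‖ ^ 2 ≤ 1 / (K : ℝ) ^ 4) :
    ‖∑ j, β j‖ ^ 2 ≥ (1 - 1 / Real.sqrt K) ^ 2 / (K : ℝ) := by
  have hKpos : (0 : ℝ) < K := by positivity
  have hsqK : (0 : ℝ) < Real.sqrt K := Real.sqrt_pos.mpr hKpos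
  -- |β j₀| ≥ 1/√K
  have hbig' : ‖β j₀‖ ≥ 1 / Real.sqrt K := by
    have := Real.sqrt_le_sqrt hbig
    rwa [Real.sqrt_sq (norm_nonneg _), one_div, Real.sqrt_inv, ← one_div] at this
  -- each small amplitude ≤ 1/K²
  have hsmall' : ∀ j : Fin K, j ≠ j₀ → ‖β j‖ ≤ 1 / (K : ℝ) ^ 2 := by
    intro j hj
    have := Real.sqrt_le_sqrt (hsmall j hj)
    rwa [Real.sqrt_sq (norm_nonneg _),
      show (1 / (K : ℝ) ^ 4) = (1 / (K:ℝ)^2)^2 by ring,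
      Real.sqrt_sq (by positivity)] at this
  -- triangle-type bound
  have hsplit : (∑ j, β j) = β j₀ + ∑ j ∈ Finset.univ.erase j₀, β j := by
    rw [Finset.add_sum_erase _ _ (Finset.mem_univ j₀)]
  have htail : ‖∑ j ∈ Finset.univ.erase j₀, β j‖ ≤ 1 / (K : ℝ) := by
    calc ‖∑ j ∈ Finset.univ.erase j₀, β j‖ ≤ ∑ j ∈ Finset.univ.erase j₀, ‖β j‖ :=
          norm_sum_le _ _
      _ ≤ ∑ j ∈ Finset.univ.erase j₀, 1 / (K : ℝ) ^ 2 :=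
          Finset.sum_le_sum (fun j hj => hsmall' j (Finset.mem_erase.mp hj).1)
      _ = (K - 1) * (1 / (K : ℝ) ^ 2) := by
          rw [Finset.sum_const, nsmul_eq_mul, Finset.card_erase_of_mem (Finset.mem_univ j₀),
            Finset.card_univ, Fintype.card_fin]
          have : (1:ℝ) ≤ K := by exact_mod_cast Nat.one_le_of_lt hK
          rw [Nat.cast_sub (by omega)]
          norm_num
      _ ≤ 1 / (K : ℝ) := by
          rw [mul_one_div, div_le_div_iff₀ (by positivity) hKpos]
          nlinarith
  have hlow : ‖∑ j, β j‖ ≥ 1 / Real.sqrt K - 1 / (K : ℝ) := by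
    have := norm_sub_norm_le (β j₀) (-(∑ j ∈ Finset.univ.erase j₀, β j))
    rw [sub_neg_eq_add, ← hsplit, norm_neg] at this
    linarith
  -- 1/√K ≥ 1/K since √K ≤ K
  have hsK : Real.sqrt K ≤ K := by
    have h1 : (1:ℝ) ≤ K := by exact_mod_cast Nat.one_le_of_lt hK
    calc Real.sqrt K ≤ Real.sqrt ((K:ℝ)^2) := Real.sqrt_le_sqrt (by nlinarith)
      _ = K := Real.sqrt_sq hKpos.le
  have hge0 : (0:ℝ) ≤ 1 / Real.sqrt K - 1 / (K : ℝ) := by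
    have : 1 / (K:ℝ) ≤ 1 / Real.sqrt K := by
      apply one_div_le_one_div_of_le hsqK hsK
    linarith
  have hsq : ‖∑ j, β j‖ ^ 2 ≥ (1 / Real.sqrt K - 1 / (K : ℝ)) ^ 2 := by
    have := pow_le_pow_left₀ hge0 hlow 2
    linarith
  have hkey : (1 / Real.sqrt K - 1 / (K : ℝ)) ^ 2 = (1 - 1 / Real.sqrt K) ^ 2 / (K : ℝ) := by
    set s := Real.sqrt K with hsdef
    have hs : s ^ 2 = (K : ℝ) := Real.sq_sqrt hKpos.le
    rw [← hs]
    field_simp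
  linarith [hkey ▸ hsq]
end

section
/- Let P, Q : Fin n → ℝ be probability distributions arising as P i = |⟨e_i, Ψ⟩|² and Q i = |⟨e_i, Φ⟩|² for unit vectors Ψ, Φ and an orthonormal basis (e_i). Then (1/2) ∑ i |P i - Q i| ≤ √(1 - |⟨Ψ, Φ⟩|²). -/
open Finset in
lemma stmt_6_aux {n : ℕ} (a b : Fin n → ℝ) (ha : ∀ i, 0 ≤ a i) (hb : ∀ i, 0 ≤ b i)
    (ha2 : ∑ i, a i ^ 2 = 1) (hb2 : ∑ i, b i ^ 2 = 1) (F : ℝ) (hF : 0 ≤ F)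
    (hFs : F ≤ ∑ i, a i * b i) :
    (1 / 2) * ∑ i, |a i ^ 2 - b i ^ 2| ≤ Real.sqrt (1 - F ^ 2) := by
  set s := ∑ i, a i * b i with hs
  have hsum : ∑ i, |a i ^ 2 - b i ^ 2| = ∑ i, |a i - b i| * (a i + b i) := by
    refine Finset.sum_congr rfl fun i _ => ?_
    rw [show a i ^ 2 - b i ^ 2 = (a i - b i) * (a i + b i) by ring, abs_mul,
      abs_of_nonneg (add_nonneg (ha i) (hb i))]
  have hCS := Finset.sum_mul_sq_le_sq_mul_sq Finset.univ (fun i => |a i - b i|)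
    (fun i => a i + b i)
  simp only [sq_abs] at hCS
  have hS : ∑ i, (a i - b i) ^ 2 = 2 - 2 * s := by
    rw [Finset.sum_congr rfl (fun i (_ : i ∈ Finset.univ) =>
      show (a i - b i) ^ 2 = a i ^ 2 + b i ^ 2 - 2 * (a i * b i) from by ring),
      Finset.sum_sub_distrib, Finset.sum_add_distrib, ← Finset.mul_sum, ha2, hb2, ← hs]; ring
  have hT : ∑ i, (a i + b i) ^ 2 = 2 + 2 * s := by
    rw [Finset.sum_congr rfl (fun i (_ : i ∈ Finset.univ) =>
      show (a i + b i) ^ 2 = a i ^ 2 + b i ^ 2 + 2 * (a i * b i) from by ring),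
      Finset.sum_add_distrib, Finset.sum_add_distrib, ← Finset.mul_sum, ha2, hb2, ← hs]; ring
  rw [hS, hT] at hCS
  have hF2 : F ^ 2 ≤ s ^ 2 := by nlinarith
  have hkey : (∑ i, |a i ^ 2 - b i ^ 2|) ^ 2 ≤ 4 * (1 - F ^ 2) := by
    rw [hsum]; nlinarith
  have hnn : 0 ≤ ∑ i, |a i ^ 2 - b i ^ 2| :=
    Finset.sum_nonneg fun i _ => abs_nonneg _
  have h1 : ∑ i, |a i ^ 2 - b i ^ 2| ≤ Real.sqrt (4 * (1 - F ^ 2)) := by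
    rw [← Real.sqrt_sq hnn]
    exact Real.sqrt_le_sqrt hkey
  have h2 : Real.sqrt (4 * (1 - F ^ 2)) = 2 * Real.sqrt (1 - F ^ 2) := by
    rw [Real.sqrt_mul (by norm_num), show (4:ℝ) = 2 ^ 2 by norm_num,
      Real.sqrt_sq (by norm_num)]
  linarith [h1, h2.le, h2.ge]

theorem stmt_6 {n : ℕ} {E : Type*} [NormedAddCommGroup E] [InnerProductSpace ℂ E]
    (e : OrthonormalBasis (Fin n) ℂ E) (Ψ Φ : E)
    (hΨ : ‖Ψ‖ = 1) (hΦ : ‖Φ‖ = 1)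
    (P Q : Fin n → ℝ)
    (hP : ∀ i, P i = ‖(inner ℂ (e i) Ψ : ℂ)‖ ^ 2)
    (hQ : ∀ i, Q i = ‖(inner ℂ (e i) Φ : ℂ)‖ ^ 2) :
    (1 / 2) * ∑ i, |P i - Q i| ≤ Real.sqrt (1 - ‖(inner ℂ Ψ Φ : ℂ)‖ ^ 2) := by
  set a : Fin n → ℝ := fun i => ‖(inner ℂ (e i) Ψ : ℂ)‖ with haa
  set b : Fin n → ℝ := fun i => ‖(inner ℂ (e i) Φ : ℂ)‖ with hbb
  have hnormsum : ∀ x : E, ‖x‖ = 1 → ∑ i, ‖(inner ℂ (e i) x : ℂ)‖ ^ 2 = 1 := by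
    intro x hx
    have h := e.sum_inner_mul_inner x x
    have h2 : ∀ i, (inner ℂ x (e i) : ℂ) * (inner ℂ (e i) x : ℂ)
        = ((‖(inner ℂ (e i) x : ℂ)‖ : ℂ)) ^ 2 := by
      intro i
      rw [show (inner ℂ x (e i) : ℂ) = starRingEnd ℂ (inner ℂ (e i) x) from
        (inner_conj_symm x (e i)).symm, RCLike.conj_mul]
      norm_num
    rw [Finset.sum_congr rfl (fun i _ => h2 i)] at h
    rw [inner_self_eq_norm_sq_to_K, hx] at h
    have : ((∑ i, ‖(inner ℂ (e i) x : ℂ)‖ ^ 2 : ℝ) : ℂ) = ((1 : ℝ) : ℂ) := by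
      push_cast
      simpa using h
    exact_mod_cast this
  have hFs : ‖(inner ℂ Ψ Φ : ℂ)‖ ≤ ∑ i, a i * b i := by
    have h := e.sum_inner_mul_inner Ψ Φ
    calc ‖(inner ℂ Ψ Φ : ℂ)‖ = ‖∑ i, (inner ℂ Ψ (e i) : ℂ) * (inner ℂ (e i) Φ : ℂ)‖ := by rw [h]
      _ ≤ ∑ i, ‖(inner ℂ Ψ (e i) : ℂ) * (inner ℂ (e i) Φ : ℂ)‖ := norm_sum_le _ _
      _ = ∑ i, a i * b i := by
          refine Finset.sum_congr rfl fun i _ => ?_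
          rw [norm_mul, norm_inner_symm]
  have hper : ∀ i, P i - Q i = a i ^ 2 - b i ^ 2 := fun i => by rw [hP, hQ]
  simp only [hper]
  exact stmt_6_aux a b (fun i => norm_nonneg _) (fun i => norm_nonneg _)
    (hnormsum Ψ hΨ) (hnormsum Φ hΦ) _ (norm_nonneg _) hFs
end
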